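/- Let A, B be real n×n matrices, ψ > 0, and suppose there exist symmetric positive definite matrices P, S such that [[AᵀP + PA + ψP, PB], [BᵀP, -S]] ⪯ 0. Then every solution of ζ' = Aζ + Bd with bounded continuous input d satisfies ‖ζ(t)‖ ≤ (2 λ_max(P)/λ_min(P))^{1/2} e^{-ψt/2} ‖ζ(0)‖ + (2 λ_max(S)/(ψ λ_min(P)))^{1/2} · sup_{τ∈[0,t]} ‖d(τ)‖ for all t ≥ 0. -/

import Mathlib

open Matrix

lemma quad_eq {n : ℕ} [NeZero n] {M : Matrix (Fin n) (Fin n) ℝ} (hM : M.IsHermitian)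
    (x : EuclideanSpace ℝ (Fin n)) :
    inner ℝ x (Matrix.toEuclideanLin M x) =
      ∑ i, hM.eigenvalues i * (inner ℝ (hM.eigenvectorBasis i) x : ℝ)^2 := by
  have hsym : (Matrix.toEuclideanLin M).IsSymmetric := (Matrix.isHermitian_iff_isSymmetric).1 hM
  have hb : ∀ i, Matrix.toEuclideanLin M (hM.eigenvectorBasis i)
      = hM.eigenvalues i • hM.eigenvectorBasis i := by
    intro i
    apply (WithLp.equiv 2 (Fin n → ℝ)).injective
    simpa using hM.mulVec_eigenvectorBasis i
  rw [← hM.eigenvectorBasis.sum_inner_mul_inner x (Matrix.toEuclideanLin M x)]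
  refine Finset.sum_congr rfl fun i _ => ?_
  have : (inner ℝ (hM.eigenvectorBasis i) (Matrix.toEuclideanLin M x) : ℝ)
      = hM.eigenvalues i * inner ℝ (hM.eigenvectorBasis i) x := by
    rw [← hsym (hM.eigenvectorBasis i) x, hb i]
    exact real_inner_smul_left _ _ _
  rw [this, real_inner_comm x]
  ring

lemma quad_bounds {n : ℕ} [NeZero n] {M : Matrix (Fin n) (Fin n) ℝ} (hM : M.IsHermitian)
    (x : EuclideanSpace ℝ (Fin n)) :
    (⨅ i, hM.eigenvalues i) * ‖x‖^2 ≤ inner ℝ x (Matrix.toEuclideanLin M x) ∧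
    (inner ℝ x (Matrix.toEuclideanLin M x) : ℝ) ≤ (⨆ i, hM.eigenvalues i) * ‖x‖^2 := by
  have hnorm : ‖x‖^2 = ∑ i, (inner ℝ (hM.eigenvectorBasis i) x : ℝ)^2 := by
    have h := hM.eigenvectorBasis.sum_inner_mul_inner x x
    rw [real_inner_self_eq_norm_sq] at h
    rw [← h]
    refine Finset.sum_congr rfl fun i _ => ?_
    rw [real_inner_comm x]; ring
  rw [quad_eq hM x, hnorm, Finset.mul_sum, Finset.mul_sum]
  constructor <;> refine Finset.sum_le_sum fun i _ => ?_
  · exact mul_le_mul_of_nonneg_right (ciInf_le (Set.Finite.bddBelow (Set.finite_range _)) i)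
      (sq_nonneg _)
  · exact mul_le_mul_of_nonneg_right (le_ciSup (Set.Finite.bddAbove (Set.finite_range _)) i)
      (sq_nonneg _)

lemma iInf_pos_of_posdef {n : ℕ} [NeZero n] {M : Matrix (Fin n) (Fin n) ℝ} (hM : M.PosDef) :
    0 < ⨅ i, hM.1.eigenvalues i := by
  obtain ⟨i, hi⟩ := exists_eq_ciInf_of_finite (f := hM.1.eigenvalues)
  rw [← hi]; exact hM.eigenvalues_pos i

lemma iSup_pos_of_posdef {n : ℕ} [NeZero n] {M : Matrix (Fin n) (Fin n) ℝ} (hM : M.PosDef) :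
    0 < ⨆ i, hM.1.eigenvalues i := by
  obtain ⟨i, hi⟩ := exists_eq_ciSup_of_finite (f := hM.1.eigenvalues)
  rw [← hi]; exact hM.eigenvalues_pos i

lemma lmi_pointwise {n : ℕ} {A B P S : Matrix (Fin n) (Fin n) ℝ} {ψ : ℝ}
    (hLMI : (-(Matrix.fromBlocks (Aᵀ * P + P * A + ψ • P) (P * B) (Bᵀ * P) (-S))).PosSemidef)
    (x u : Fin n → ℝ) :
    x ⬝ᵥ ((Aᵀ * P + P * A + ψ • P) *ᵥ x) + x ⬝ᵥ ((P * B) *ᵥ u) + u ⬝ᵥ ((Bᵀ * P) *ᵥ x)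
      ≤ u ⬝ᵥ (S *ᵥ u) := by
  have h := hLMI.dotProduct_mulVec_nonneg (Sum.elim x u)
  rw [neg_mulVec, dotProduct_neg, star_trivial] at h
  rw [fromBlocks_mulVec] at h
  simp only [Sum.elim_comp_inl, Sum.elim_comp_inr, sumElim_dotProduct_sumElim,
    dotProduct_add, neg_mulVec, dotProduct_neg] at h
  linarith

lemma inner_dot {n : ℕ} (x y : EuclideanSpace ℝ (Fin n)) :
    (inner ℝ x y : ℝ) = (WithLp.equiv 2 _ x) ⬝ᵥ (WithLp.equiv 2 _ y) := by
  simp [PiLp.inner_apply, dotProduct, mul_comm]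

lemma mulVec_dot {n : ℕ} (A : Matrix (Fin n) (Fin n) ℝ) (x y : Fin n → ℝ) :
    (A *ᵥ x) ⬝ᵥ y = x ⬝ᵥ (Aᵀ *ᵥ y) := by
  rw [dotProduct_mulVec, vecMul_transpose]

lemma lmi_inner {n : ℕ} [NeZero n] (A B P S : Matrix (Fin n) (Fin n) ℝ) (ψ : ℝ)
    (hS : S.PosDef)
    (hLMI : (-(Matrix.fromBlocks (Aᵀ * P + P * A + ψ • P) (P * B) (Bᵀ * P) (-S))).PosSemidef)
    (z u : EuclideanSpace ℝ (Fin n)) :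
    (inner ℝ z (Matrix.toEuclideanLin P (Matrix.toEuclideanLin A z + Matrix.toEuclideanLin B u)) : ℝ)
     + inner ℝ (Matrix.toEuclideanLin A z + Matrix.toEuclideanLin B u) (Matrix.toEuclideanLin P z)
     + ψ * inner ℝ z (Matrix.toEuclideanLin P z)
     ≤ (⨆ i, hS.1.eigenvalues i) * ‖u‖^2 := by
  have hq := (quad_bounds hS.1 u).2
  have hl := lmi_pointwise hLMI (WithLp.equiv 2 (Fin n → ℝ) z) (WithLp.equiv 2 (Fin n → ℝ) u)
  simp only [inner_dot] at *
  simp only [WithLp.equiv_apply, WithLp.ofLp_add, ofLp_toEuclideanLin_apply, toLin'_apply, map_add] at *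
  simp only [add_mulVec, smul_mulVec, dotProduct_add, add_dotProduct,
    dotProduct_smul, smul_eq_mul, mulVec_mulVec, mulVec_dot, transpose_transpose] at *
  linarith

theorem stmt3 {n : ℕ} [NeZero n] (A B P S : Matrix (Fin n) (Fin n) ℝ) (ψ : ℝ) (hψ : 0 < ψ)
    (hP : P.PosDef) (hS : S.PosDef)
    (hLMI : (-(Matrix.fromBlocks (Aᵀ * P + P * A + ψ • P) (P * B) (Bᵀ * P) (-S))).PosSemidef)
    (ζ d : ℝ → EuclideanSpace ℝ (Fin n)) (hdc : Continuous d) (hbd : ∃ Cb, ∀ t, ‖d t‖ ≤ Cb)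
    (hζ : ∀ t, HasDerivAt ζ (Matrix.toEuclideanLin A (ζ t) + Matrix.toEuclideanLin B (d t)) t) :
    ∀ t ≥ 0, ‖ζ t‖ ≤
      Real.sqrt (2 * (⨆ i, hP.1.eigenvalues i) / (⨅ i, hP.1.eigenvalues i)) *
        Real.exp (-ψ * t / 2) * ‖ζ 0‖
      + Real.sqrt (2 * (⨆ i, hS.1.eigenvalues i) / (ψ * (⨅ i, hP.1.eigenvalues i)))
        * sSup ((fun τ => ‖d τ‖) '' Set.Icc 0 t) := by
  intro t ht
  obtain ⟨Cb, hCb⟩ := hbd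
  set lP := ⨅ i, hP.1.eigenvalues i with hlPdef
  set LP := ⨆ i, hP.1.eigenvalues i with hLPdef
  set LS := ⨆ i, hS.1.eigenvalues i with hLSdef
  have hlP0 : 0 < lP := iInf_pos_of_posdef hP
  have hLP0 : 0 < LP := iSup_pos_of_posdef hP
  have hLS0 : 0 < LS := iSup_pos_of_posdef hS
  set M := sSup ((fun τ => ‖d τ‖) '' Set.Icc 0 t) with hMdef
  have hbdd : BddAbove ((fun τ => ‖d τ‖) '' Set.Icc 0 t) := by
    refine ⟨Cb, ?_⟩; rintro _ ⟨τ, _, rfl⟩; exact hCb τ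
  have hd0 : ‖d 0‖ ≤ M := le_csSup hbdd ⟨0, ⟨le_refl 0, ht⟩, rfl⟩
  have hM0 : 0 ≤ M := le_trans (norm_nonneg _) hd0
  have hdM : ∀ τ ∈ Set.Icc (0:ℝ) t, ‖d τ‖ ≤ M := fun τ hτ => le_csSup hbdd ⟨τ, hτ, rfl⟩
  -- Lyapunov function and its derivative
  set g : ℝ → ℝ := fun τ => inner ℝ (ζ τ) (Matrix.toEuclideanLin P (ζ τ)) with hgdef
  set g' : ℝ → ℝ := fun τ =>
    inner ℝ (ζ τ) (Matrix.toEuclideanLin P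
      (Matrix.toEuclideanLin A (ζ τ) + Matrix.toEuclideanLin B (d τ)))
    + inner ℝ (Matrix.toEuclideanLin A (ζ τ) + Matrix.toEuclideanLin B (d τ))
      (Matrix.toEuclideanLin P (ζ τ)) with hg'def
  have hgd : ∀ τ, HasDerivAt g (g' τ) τ := by
    intro τ
    have h2 : HasDerivAt (fun τ => Matrix.toEuclideanLin P (ζ τ))
        (Matrix.toEuclideanLin P
          (Matrix.toEuclideanLin A (ζ τ) + Matrix.toEuclideanLin B (d τ))) τ := by
      have := (LinearMap.toContinuousLinearMap
        (Matrix.toEuclideanLin P)).hasFDerivAt.comp_hasDerivAt τ (hζ τ)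
      exact this
    exact (hζ τ).inner (𝕜 := ℝ) h2
  set c := LS * M^2 with hcdef
  have hc0 : 0 ≤ c := mul_nonneg hLS0.le (sq_nonneg M)
  have hkey : ∀ τ ∈ Set.Icc (0:ℝ) t, g' τ + ψ * g τ ≤ c := by
    intro τ hτ
    have h1 := lmi_inner A B P S ψ hS hLMI (ζ τ) (d τ)
    have h2 : ‖d τ‖^2 ≤ M^2 := by
      have := hdM τ hτ
      nlinarith [norm_nonneg (d τ)]
    have h3 : LS * ‖d τ‖^2 ≤ c := by rw [hcdef]; nlinarith
    simp only [hgdef, hg'def]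
    linarith
  -- Gronwall-type estimate
  have hanti : AntitoneOn (fun τ => Real.exp (ψ*τ) * (ψ * g τ) - c * Real.exp (ψ*τ))
      (Set.Icc 0 t) := by
    have hder : ∀ τ, HasDerivAt (fun τ => Real.exp (ψ*τ) * (ψ * g τ) - c * Real.exp (ψ*τ))
        (Real.exp (ψ*τ) * ψ * (ψ * g τ) + Real.exp (ψ*τ) * (ψ * g' τ)
          - c * (Real.exp (ψ*τ) * ψ)) τ := by
      intro τ
      have he : HasDerivAt (fun τ => Real.exp (ψ*τ)) (Real.exp (ψ*τ) * ψ) τ := by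
        simpa using ((hasDerivAt_id τ).const_mul ψ).exp
      exact (he.mul ((hgd τ).const_mul ψ)).sub (he.const_mul c)
    apply antitoneOn_of_deriv_nonpos (convex_Icc 0 t)
    · exact fun τ _ => (hder τ).continuousAt.continuousWithinAt
    · exact fun τ _ => (hder τ).differentiableAt.differentiableWithinAt
    · intro τ hτ
      rw [(hder τ).deriv]
      have hτ' : τ ∈ Set.Icc (0:ℝ) t := interior_subset hτ
      have h1 := hkey τ hτ'
      have h2 := Real.exp_pos (ψ*τ)
      nlinarith [mul_le_mul_of_nonneg_left h1 (mul_pos h2 hψ).le]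
  have hht := hanti ⟨le_refl 0, ht⟩ ⟨ht, le_refl t⟩ ht
  simp only [mul_zero, Real.exp_zero, one_mul, mul_one] at hht
  -- hht : exp(ψt)*(ψ*g t) - c*exp(ψt) ≤ ψ*g 0 - c
  have hEinv : Real.exp (-(ψ*t)) * Real.exp (ψ*t) = 1 := by rw [← Real.exp_add]; simp
  have hEinv0 : (0:ℝ) ≤ Real.exp (-(ψ*t)) := (Real.exp_pos _).le
  have h3 := mul_le_mul_of_nonneg_left hht hEinv0
  rw [mul_sub] at h3
  have h4 : Real.exp (-(ψ*t)) * (Real.exp (ψ*t) * (ψ * g t)) = ψ * g t := by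
    rw [← mul_assoc, hEinv, one_mul]
  have h5 : Real.exp (-(ψ*t)) * (c * Real.exp (ψ*t)) = c := by
    rw [mul_comm c, ← mul_assoc, hEinv, one_mul]
  rw [h4, h5, mul_sub] at h3
  -- h3 : ψ * g t - c ≤ exp(-(ψt)) * (ψ * g 0) - exp(-(ψt)) * c
  have hgt : ψ * g t ≤ Real.exp (-(ψ*t)) * (ψ * g 0) + c := by
    nlinarith [mul_nonneg hEinv0 hc0]
  -- quadratic bounds
  have hlow : lP * ‖ζ t‖^2 ≤ g t := (quad_bounds hP.1 (ζ t)).1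
  have hup : g 0 ≤ LP * ‖ζ 0‖^2 := (quad_bounds hP.1 (ζ 0)).2
  have hfin : ψ * lP * ‖ζ t‖^2 ≤ ψ * Real.exp (-(ψ*t)) * LP * ‖ζ 0‖^2 + LS * M^2 := by
    have hA := mul_le_mul_of_nonneg_left hlow hψ.le
    have hB := mul_le_mul_of_nonneg_left hup (mul_nonneg hψ.le hEinv0)
    rw [hcdef] at hgt
    nlinarith
  -- final algebra
  set K1 := Real.sqrt (2 * LP / lP) * Real.exp (-ψ * t / 2) * ‖ζ 0‖ with hK1def
  set K2 := Real.sqrt (2 * LS / (ψ * lP)) * M with hK2def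
  have e2 : Real.exp (-ψ * t / 2) ^ 2 = Real.exp (-(ψ*t)) := by
    rw [sq, ← Real.exp_add]; congr 1; ring
  have hK1 : 0 ≤ K1 := by positivity
  have hK2 : 0 ≤ K2 := mul_nonneg (Real.sqrt_nonneg _) hM0
  have hK1sq : lP * K1^2 = 2 * LP * Real.exp (-(ψ*t)) * ‖ζ 0‖^2 := by
    rw [hK1def, mul_pow, mul_pow, Real.sq_sqrt (div_nonneg (by linarith) hlP0.le), e2]
    field_simp
    try ring
  have hK2sq : (ψ * lP) * K2^2 = 2 * LS * M^2 := by
    rw [hK2def, mul_pow, Real.sq_sqrt (div_nonneg (by linarith) (mul_pos hψ hlP0).le)]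
    field_simp
    try ring
  have hK1sq' : ψ * lP * K1^2 = ψ * (2 * LP * Real.exp (-(ψ*t)) * ‖ζ 0‖^2) := by
    rw [mul_assoc, hK1sq]
  have h6 : 2 * ‖ζ t‖^2 ≤ K1^2 + K2^2 := by
    have h8 : ψ * lP * (2 * ‖ζ t‖^2) ≤ ψ * lP * (K1^2 + K2^2) := by
      have e1 : ψ * lP * (K1^2 + K2^2) = ψ * lP * K1^2 + (ψ * lP) * K2^2 := by ring
      rw [e1, hK1sq', hK2sq]
      linarith
    exact le_of_mul_le_mul_left h8 (mul_pos hψ hlP0)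
  have h7 : ‖ζ t‖^2 ≤ (K1+K2)^2 := by
    have e3 : (K1+K2)^2 = K1^2 + K2^2 + 2*(K1*K2) := by ring
    linarith [mul_nonneg hK1 hK2, sq_nonneg (‖ζ t‖), h6, e3]
  calc ‖ζ t‖ = Real.sqrt (‖ζ t‖^2) := (Real.sqrt_sq (norm_nonneg _)).symm
    _ ≤ Real.sqrt ((K1+K2)^2) := Real.sqrt_le_sqrt h7
    _ = K1 + K2 := Real.sqrt_sq (add_nonneg hK1 hK2)
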